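/- Minimizing χ̂(w) = (Σᵢ (wᵢχᵢ)^{c/(c−1)})^{(c−1)/c} with c>1, χᵢ>0, over weights wᵢ ≥ 0 with Σ wᵢ = 1 yields the unique minimizer wᵢ* = χᵢ^{−c}/Σⱼ χⱼ^{−c}, with minimal value χ̂* = (Σⱼ χⱼ^{−c})^{−1/c}. -/

import Mathlib

open Real Finset

/-- Tangent line inequality for `x ↦ x^p`, `p > 1`. -/
lemma tangent_le_aux {p a x : ℝ} (hp : 1 < p) (ha : 0 < a) (hx : 0 ≤ x) :
    a ^ p + p * a ^ (p - 1) * (x - a) ≤ x ^ p := by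
  have hs : (-1 : ℝ) ≤ x / a - 1 := by
    have : 0 ≤ x / a := div_nonneg hx ha.le
    linarith
  have hb := one_add_mul_self_le_rpow_one_add hs hp.le
  have h1 : 1 + (x / a - 1) = x / a := by ring
  rw [h1] at hb
  have hmul := mul_le_mul_of_nonneg_left hb (Real.rpow_pos_of_pos ha p).le
  have h2 : a ^ p * (x / a) ^ p = x ^ p := by
    rw [Real.div_rpow hx ha.le, mul_div_cancel₀]
    exact (Real.rpow_pos_of_pos ha p).ne'
  have h3 : a ^ p * (1 + p * (x / a - 1)) = a ^ p + p * a ^ (p - 1) * (x - a) := by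
    have hap : a ^ p = a ^ (p - 1) * a := by
      rw [← Real.rpow_add_one ha.ne' (p - 1), sub_add_cancel]
    rw [hap]; field_simp
  rw [h2, h3] at hmul
  exact hmul

lemma tangent_lt_aux {p a x : ℝ} (hp : 1 < p) (ha : 0 < a) (hx : 0 ≤ x) (hne : x ≠ a) :
    a ^ p + p * a ^ (p - 1) * (x - a) < x ^ p := by
  have hs : (-1 : ℝ) ≤ x / a - 1 := by
    have : 0 ≤ x / a := div_nonneg hx ha.le
    linarith
  have hs' : x / a - 1 ≠ 0 := by
    intro h
    apply hne
    field_simp at h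
    linarith
  have hb := one_add_mul_self_lt_rpow_one_add hs hs' hp
  have h1 : 1 + (x / a - 1) = x / a := by ring
  rw [h1] at hb
  have hmul := mul_lt_mul_of_pos_left hb (Real.rpow_pos_of_pos ha p)
  have h2 : a ^ p * (x / a) ^ p = x ^ p := by
    rw [Real.div_rpow hx ha.le, mul_div_cancel₀]
    exact (Real.rpow_pos_of_pos ha p).ne'
  have h3 : a ^ p * (1 + p * (x / a - 1)) = a ^ p + p * a ^ (p - 1) * (x - a) := by
    have hap : a ^ p = a ^ (p - 1) * a := by
      rw [← Real.rpow_add_one ha.ne' (p - 1), sub_add_cancel]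
    rw [hap]; field_simp
  rw [h2, h3] at hmul
  exact hmul

/-- Minimizing `χ̂(w) = (∑ (wᵢχᵢ)^{c/(c-1)})^{(c-1)/c}` with `c > 1` over the simplex
yields the unique minimizer `wᵢ* = χᵢ^{-c} / ∑ χⱼ^{-c}`, with minimal value
`(∑ χⱼ^{-c})^{-1/c}`. -/
theorem stmt_12 (N : ℕ) (hN : 0 < N) (c : ℝ) (χ : Fin N → ℝ)
    (hc : 1 < c) (hχ : ∀ i, 0 < χ i) :
    let wstar : Fin N → ℝ := fun i => χ i ^ (-c) / ∑ j, χ j ^ (-c)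
    (∀ i, 0 ≤ wstar i) ∧ (∑ i, wstar i = 1) ∧
    ((∑ i, (wstar i * χ i) ^ (c/(c-1))) ^ ((c-1)/c)
      = (∑ j, χ j ^ (-c)) ^ (-(1 : ℝ)/c)) ∧
    (∀ w : Fin N → ℝ, (∀ i, 0 ≤ w i) → (∑ i, w i = 1) → w ≠ wstar →
      (∑ i, (wstar i * χ i) ^ (c/(c-1))) ^ ((c-1)/c)
        < (∑ i, (w i * χ i) ^ (c/(c-1))) ^ ((c-1)/c)) := by
  intro wstar
  have hc1 : (0:ℝ) < c - 1 := by linarith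
  set p : ℝ := c / (c - 1) with hpdef
  have hp : 1 < p := by
    rw [hpdef, lt_div_iff₀ hc1]; linarith
  set S : ℝ := ∑ j, χ j ^ (-c) with hSdef
  have hS : 0 < S := by
    apply Finset.sum_pos
    · exact fun i _ => Real.rpow_pos_of_pos (hχ i) _
    · exact Finset.univ_nonempty_iff.mpr (Fin.pos_iff_nonempty.mp hN)
  have hwpos : ∀ i, 0 < wstar i := fun i =>
    div_pos (Real.rpow_pos_of_pos (hχ i) _) hS
  have hsum1 : ∑ i, wstar i = 1 := by
    simp only [wstar, ← Finset.sum_div, ← hSdef, div_self hS.ne']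
  -- a i := wstar i * χ i
  have hA : ∀ i, wstar i * χ i = χ i ^ (1 - c) / S := by
    intro i
    have : χ i ^ (-c) * χ i = χ i ^ (1 - c) := by
      rw [show (1:ℝ) - c = -c + 1 by ring, Real.rpow_add (hχ i), Real.rpow_one]
    simp only [wstar]
    rw [div_mul_eq_mul_div, this]
  have hApow : ∀ i, (wstar i * χ i) ^ p = χ i ^ (-c) / S ^ p := by
    intro i
    rw [hA i, Real.div_rpow (Real.rpow_pos_of_pos (hχ i) _).le hS.le,
      ← Real.rpow_mul (hχ i).le]
    congr 2
    rw [hpdef]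
    field_simp
    ring
  have hSumA : ∑ i, (wstar i * χ i) ^ p = S ^ (1 - p) := by
    simp only [hApow]
    rw [← Finset.sum_div, ← hSdef, Real.rpow_sub hS, Real.rpow_one]
  have hval : (∑ i, (wstar i * χ i) ^ p) ^ ((c-1)/c) = S ^ (-(1:ℝ)/c) := by
    rw [hSumA, ← Real.rpow_mul hS.le]
    congr 1
    rw [hpdef]
    field_simp
    ring
  refine ⟨fun i => (hwpos i).le, hsum1, hval, ?_⟩
  intro w hw hwsum hwne
  -- key: ∑ (wstar i * χ i)^p < ∑ (w i * χ i)^p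
  have hApos : ∀ i, 0 < wstar i * χ i := fun i => mul_pos (hwpos i) (hχ i)
  have hAp1 : ∀ i, p * (wstar i * χ i) ^ (p - 1) * (w i * χ i - wstar i * χ i)
      = p * S ^ (1 - p) * (w i - wstar i) := by
    intro i
    have h1 : (wstar i * χ i) ^ (p - 1) = χ i ^ (-(1:ℝ)) / S ^ (p - 1) := by
      rw [hA i, Real.div_rpow (Real.rpow_pos_of_pos (hχ i) _).le hS.le,
        ← Real.rpow_mul (hχ i).le]
      congr 2
      rw [hpdef]
      field_simp
      ring
    rw [h1]
    have h2 : χ i ^ (-(1:ℝ)) = (χ i)⁻¹ := by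
      rw [Real.rpow_neg (hχ i).le, Real.rpow_one]
    have h3 : S ^ (1 - p) = (S ^ (p - 1))⁻¹ := by
      rw [← Real.rpow_neg hS.le]; congr 1; ring
    rw [h2, h3]
    have h4 : (χ i)⁻¹ * χ i = 1 := inv_mul_cancel₀ (hχ i).ne'
    calc p * ((χ i)⁻¹ / S ^ (p - 1)) * (w i * χ i - wstar i * χ i)
        = p * (S ^ (p - 1))⁻¹ * (w i - wstar i) * ((χ i)⁻¹ * χ i) := by ring
      _ = p * (S ^ (p - 1))⁻¹ * (w i - wstar i) := by rw [h4, mul_one]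
  have hkey : ∑ i, (wstar i * χ i) ^ p < ∑ i, (w i * χ i) ^ p := by
    obtain ⟨i0, hi0⟩ : ∃ i, w i ≠ wstar i := by
      by_contra h
      push_neg at h
      exact hwne (funext h)
    have hlin : ∑ i, ((wstar i * χ i) ^ p
        + p * (wstar i * χ i) ^ (p - 1) * (w i * χ i - wstar i * χ i))
        = ∑ i, (wstar i * χ i) ^ p := by
      rw [Finset.sum_add_distrib]
      have : ∑ i, p * (wstar i * χ i) ^ (p - 1) * (w i * χ i - wstar i * χ i) = 0 := by
        simp only [hAp1, ← Finset.mul_sum, Finset.sum_sub_distrib, hwsum, hsum1]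
        simp
      rw [this, add_zero]
    rw [← hlin]
    apply Finset.sum_lt_sum
    · intro i _
      exact tangent_le_aux hp (hApos i) (mul_nonneg (hw i) (hχ i).le)
    · refine ⟨i0, Finset.mem_univ i0, ?_⟩
      apply tangent_lt_aux hp (hApos i0) (mul_nonneg (hw i0) (hχ i0).le)
      intro h
      exact hi0 (mul_right_cancel₀ (hχ i0).ne' h)
  exact Real.rpow_lt_rpow (Finset.sum_nonneg fun i _ =>
    (Real.rpow_pos_of_pos (hApos i) p).le) hkey (by positivity)
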